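/- Let ℓ be an odd prime and let G ≤ GL₂(𝔽_ℓ) be a subgroup such that det : G → 𝔽_ℓ^× is surjective and the image PG of G in PGL₂(𝔽_ℓ) = GL₂(𝔽_ℓ)/center is isomorphic as a group to the alternating group A₄, the symmetric group S₄, or the alternating group A₅. Then (ℓ − 1) · |M_G| ≤ 60 · |G|. -/

import Mathlib

open Matrix Polynomial
open scoped MatrixGroups
open scoped commutatorElement

private lemma aux_card_le_mul {α β : Type*} [Finite α] [Finite β] (f : α → β) (n : ℕ)
    (h : ∀ b : β, Nat.card {a : α // f a = b} ≤ n) : Nat.card α ≤ n * Nat.card β := by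
  classical
  cases nonempty_fintype α
  cases nonempty_fintype β
  rw [Nat.card_eq_fintype_card, Nat.card_eq_fintype_card,
    ← Fintype.card_congr (Equiv.sigmaFiberEquiv f), Fintype.card_sigma]
  calc ∑ b : β, Fintype.card {a : α // f a = b} ≤ ∑ _b : β, n :=
        Finset.sum_le_sum fun b _ => by simpa [Nat.card_eq_fintype_card] using h b
    _ = n * Fintype.card β := by simp [mul_comm]

private lemma aux_card_map_le {G H : Type*} [Group G] [Group H] (f : G →* H) (S : Subgroup G)
    [Finite S] : Nat.card (S.map f) ≤ Nat.card S :=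
  Nat.card_le_card_of_surjective (fun s => ⟨f s, Subgroup.mem_map_of_mem f s.2⟩)
    (by rintro ⟨y, x, hx, rfl⟩; exact ⟨⟨x, hx⟩, rfl⟩)

private lemma aux_four_le {G : Type*} [Group G] [Finite G] (H : Subgroup G)
    {a b c : G} (ha : a ∈ H) (hb : b ∈ H) (hc : c ∈ H)
    (h1a : a ≠ 1) (h1b : b ≠ 1) (h1c : c ≠ 1) (hab : a ≠ b) (hac : a ≠ c) (hbc : b ≠ c) :
    4 ≤ Nat.card H := by
  have key : Nat.card (Fin 4) ≤ Nat.card H := by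
    apply Nat.card_le_card_of_injective
      (![⟨1, H.one_mem⟩, ⟨a, ha⟩, ⟨b, hb⟩, ⟨c, hc⟩] : Fin 4 → H)
    intro i j hij
    rw [Subtype.ext_iff] at hij
    fin_cases i <;> fin_cases j <;> simp_all [eq_comm]
  simpa using key

private lemma aux_comm_mem {G : Type*} [Group G] (a b : G) : ⁅a, b⁆ ∈ commutator G :=
  Subgroup.commutator_mem_commutator (Subgroup.mem_top _) (Subgroup.mem_top _)

private lemma aux_comm_A4 : 4 ≤ Nat.card (commutator ↥(alternatingGroup (Fin 4))) := by
  refine aux_four_le _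
    (aux_comm_mem (⟨Equiv.swap 0 1 * Equiv.swap 1 2,
        Equiv.Perm.mem_alternatingGroup.mpr (by decide)⟩ : ↥(alternatingGroup (Fin 4)))
      ⟨Equiv.swap 1 2 * Equiv.swap 2 3, Equiv.Perm.mem_alternatingGroup.mpr (by decide)⟩)
    (aux_comm_mem ⟨Equiv.swap 0 1 * Equiv.swap 1 2, Equiv.Perm.mem_alternatingGroup.mpr (by decide)⟩
      ⟨Equiv.swap 2 3 * Equiv.swap 1 2, Equiv.Perm.mem_alternatingGroup.mpr (by decide)⟩)
    (aux_comm_mem ⟨Equiv.swap 0 1 * Equiv.swap 1 2, Equiv.Perm.mem_alternatingGroup.mpr (by decide)⟩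
      ⟨Equiv.swap 0 1 * Equiv.swap 1 3, Equiv.Perm.mem_alternatingGroup.mpr (by decide)⟩)
    ?_ ?_ ?_ ?_ ?_ ?_ <;> (rw [Ne, Subtype.ext_iff]; decide)

private lemma aux_comm_S4 : 4 ≤ Nat.card (commutator (Equiv.Perm (Fin 4))) := by
  refine aux_four_le _
    (aux_comm_mem (Equiv.swap 0 1 * Equiv.swap 1 2) (Equiv.swap 1 2 * Equiv.swap 2 3))
    (aux_comm_mem (Equiv.swap 0 1 * Equiv.swap 1 2) (Equiv.swap 2 3 * Equiv.swap 1 2))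
    (aux_comm_mem (Equiv.swap 0 1 * Equiv.swap 1 2) (Equiv.swap 0 1 * Equiv.swap 1 3))
    ?_ ?_ ?_ ?_ ?_ ?_ <;> decide

private lemma aux_comm_A5 : 4 ≤ Nat.card (commutator ↥(alternatingGroup (Fin 5))) := by
  refine aux_four_le _
    (aux_comm_mem (⟨Equiv.swap 0 1 * Equiv.swap 1 2,
        Equiv.Perm.mem_alternatingGroup.mpr (by decide)⟩ : ↥(alternatingGroup (Fin 5)))
      ⟨Equiv.swap 1 2 * Equiv.swap 2 3, Equiv.Perm.mem_alternatingGroup.mpr (by decide)⟩)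
    (aux_comm_mem ⟨Equiv.swap 0 1 * Equiv.swap 1 2, Equiv.Perm.mem_alternatingGroup.mpr (by decide)⟩
      ⟨Equiv.swap 2 3 * Equiv.swap 1 2, Equiv.Perm.mem_alternatingGroup.mpr (by decide)⟩)
    (aux_comm_mem ⟨Equiv.swap 0 1 * Equiv.swap 1 2, Equiv.Perm.mem_alternatingGroup.mpr (by decide)⟩
      ⟨Equiv.swap 0 1 * Equiv.swap 1 3, Equiv.Perm.mem_alternatingGroup.mpr (by decide)⟩)
    ?_ ?_ ?_ ?_ ?_ ?_ <;> (rw [Ne, Subtype.ext_iff]; decide)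

private lemma aux_card_comm_eq {G H : Type*} [Group G] [Group H] (e : G ≃* H) :
    Nat.card (commutator G) = Nat.card (commutator H) := by
  have h : (commutator G).map e.toMonoidHom = commutator H := by
    rw [commutator_def, commutator_def, Subgroup.map_commutator,
      Subgroup.map_top_of_surjective _ e.surjective]
  rw [← h]
  exact Nat.card_congr (Subgroup.equivMapOfInjective _ e.toMonoidHom
    (by exact e.injective)).toEquiv

private lemma aux_central_scalar {F : Type*} [Field F] (C : GL (Fin 2) F)
    (hC : C ∈ Subgroup.center (GL (Fin 2) F)) :
    ∃ r : F, r ≠ 0 ∧ (C : Matrix (Fin 2) (Fin 2) F) = r • (1 : Matrix (Fin 2) (Fin 2) F) := by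
  have hcomm : ∀ t : TransvectionStruct (Fin 2) F,
      Commute t.toMatrix (C : Matrix (Fin 2) (Fin 2) F) := by
    intro t
    let u : GL (Fin 2) F := ⟨t.toMatrix, t.inv.toMatrix, t.mul_inv, t.inv_mul⟩
    have h := Subgroup.mem_center_iff.mp hC u
    have h' := congrArg Units.val h
    exact h'
  obtain ⟨r, hr⟩ := Matrix.mem_range_scalar_of_commute_transvectionStruct hcomm
  refine ⟨r, ?_, ?_⟩
  · intro h0
    have hu : IsUnit (C : Matrix (Fin 2) (Fin 2) F) := ⟨C, rfl⟩
    rw [Matrix.isUnit_iff_isUnit_det] at hu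
    rw [← hr, h0] at hu
    simp at hu
  · rw [← hr]
    ext i j
    simp [Matrix.scalar_apply, Matrix.smul_apply, Matrix.one_apply, Matrix.diagonal_apply]

set_option maxHeartbeats 1000000 in
/-- Let `ℓ` be an odd prime and `G ≤ GL₂(𝔽_ℓ)` a subgroup such that
`det : G → 𝔽_ℓˣ` is surjective and the image `PG` of `G` in
`PGL₂(𝔽_ℓ) = GL₂(𝔽_ℓ)/center` is isomorphic to `A₄`, `S₄` or `A₅`.
Then `(ℓ − 1) * |M_G| ≤ 60 * |G|`, where `M_G` is the set of `A ∈ G` having `1` or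
`−1` as an eigenvalue. -/
theorem gl2_exceptional_eigenvalue_pm_one_count (ℓ : ℕ) (hℓ : ℓ.Prime) (hodd : Odd ℓ)
    (G : Subgroup (GL (Fin 2) (ZMod ℓ)))
    (hdet : Function.Surjective
      (fun g : G => Matrix.GeneralLinearGroup.det (g : GL (Fin 2) (ZMod ℓ))))
    (hPG :
      Nonempty
        ((G.map (QuotientGroup.mk' (Subgroup.center (GL (Fin 2) (ZMod ℓ))))) ≃*
          alternatingGroup (Fin 4)) ∨
      Nonempty
        ((G.map (QuotientGroup.mk' (Subgroup.center (GL (Fin 2) (ZMod ℓ))))) ≃*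
          Equiv.Perm (Fin 4)) ∨
      Nonempty
        ((G.map (QuotientGroup.mk' (Subgroup.center (GL (Fin 2) (ZMod ℓ))))) ≃*
          alternatingGroup (Fin 5))) :
    (ℓ - 1) * Nat.card {A : GL (Fin 2) (ZMod ℓ) // A ∈ G ∧
        (Matrix.det ((A : Matrix (Fin 2) (Fin 2) (ZMod ℓ)) - 1) = 0 ∨
         Matrix.det ((A : Matrix (Fin 2) (Fin 2) (ZMod ℓ)) + 1) = 0)} ≤
      60 * Nat.card G := by
  classical
  haveI : Fact ℓ.Prime := ⟨hℓ⟩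
  haveI : NeZero ℓ := ⟨hℓ.ne_zero⟩
  set π := QuotientGroup.mk' (Subgroup.center (GL (Fin 2) (ZMod ℓ))) with hπdef
  set PG := G.map π with hPGdef
  -- the determinant homomorphism on G
  set D : G →* (ZMod ℓ)ˣ := (Matrix.GeneralLinearGroup.det).comp G.subtype with hDdef
  have hDsurj : Function.Surjective ⇑D := hdet
  set K := D.ker with hKdef
  -- |G| = (ℓ - 1) * |K|
  have hGcard : Nat.card G = (ℓ - 1) * Nat.card K := by
    have h1 := Subgroup.card_eq_card_quotient_mul_card_subgroup K
    have h2 : Nat.card (G ⧸ K) = ℓ - 1 := by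
      rw [Nat.card_congr (QuotientGroup.quotientKerEquivOfSurjective D hDsurj).toEquiv,
        Nat.card_eq_fintype_card, ZMod.card_units_eq_totient, Nat.totient_prime hℓ]
    rw [h1, h2]
  -- |PG| ≤ 60
  have cardA4 : Nat.card ↥(alternatingGroup (Fin 4)) = 12 := by
    have h := two_mul_card_alternatingGroup (α := Fin 4)
    rw [Fintype.card_perm, Fintype.card_fin] at h
    have h24 : Nat.factorial 4 = 24 := rfl
    rw [Nat.card_eq_fintype_card]
    omega
  have cardA5 : Nat.card ↥(alternatingGroup (Fin 5)) = 60 := by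
    have h := two_mul_card_alternatingGroup (α := Fin 5)
    rw [Fintype.card_perm, Fintype.card_fin] at h
    have h120 : Nat.factorial 5 = 120 := rfl
    rw [Nat.card_eq_fintype_card]
    omega
  have cardS4 : Nat.card (Equiv.Perm (Fin 4)) = 24 := by
    rw [Nat.card_eq_fintype_card, Fintype.card_perm, Fintype.card_fin]
    decide
  have hPG60 : Nat.card PG ≤ 60 := by
    rcases hPG with ⟨⟨e⟩⟩ | ⟨⟨e⟩⟩ | ⟨⟨e⟩⟩ <;> rw [Nat.card_congr e.toEquiv] <;> omega
  -- 4 ≤ |K|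
  have h4PG : 4 ≤ Nat.card (commutator ↥PG) := by
    rcases hPG with ⟨⟨e⟩⟩ | ⟨⟨e⟩⟩ | ⟨⟨e⟩⟩ <;> rw [aux_card_comm_eq e]
    exacts [aux_comm_A4, aux_comm_S4, aux_comm_A5]
  have h4K : 4 ≤ Nat.card K := by
    have hmapcomm : (commutator ↥PG).map PG.subtype ≤ (K.map G.subtype).map π := by
      rw [commutator_def, Subgroup.map_commutator, ← MonoidHom.range_eq_map,
        Subgroup.range_subtype]
      refine Subgroup.commutator_le.mpr ?_
      intro x hx y hy
      rw [hPGdef] at hx hy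
      obtain ⟨a, ha, rfl⟩ := hx
      obtain ⟨b, hb, rfl⟩ := hy
      refine Subgroup.mem_map.mpr
        ⟨⁅a, b⁆, Subgroup.mem_map.mpr ⟨⁅(⟨a, ha⟩ : G), ⟨b, hb⟩⁆, ?_, rfl⟩,
          (map_commutatorElement π a b).symm⟩
      rw [hKdef, MonoidHom.mem_ker, map_commutatorElement]
      exact commutatorElement_eq_one_iff_commute.mpr (mul_comm _ _)
    calc 4 ≤ Nat.card (commutator ↥PG) := h4PG
      _ = Nat.card ((commutator ↥PG).map PG.subtype) :=
          Nat.card_congr (Subgroup.equivMapOfInjective _ _ (Subgroup.subtype_injective PG)).toEquiv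
      _ ≤ Nat.card ((K.map G.subtype).map π) := Subgroup.card_le_of_le hmapcomm
      _ ≤ Nat.card (K.map G.subtype) := aux_card_map_le _ _
      _ = Nat.card K :=
          (Nat.card_congr (Subgroup.equivMapOfInjective _ _ (Subgroup.subtype_injective G)).toEquiv).symm
  -- the set M and the projection to PG
  set M := {A : GL (Fin 2) (ZMod ℓ) // A ∈ G ∧
      (Matrix.det ((A : Matrix (Fin 2) (Fin 2) (ZMod ℓ)) - 1) = 0 ∨
       Matrix.det ((A : Matrix (Fin 2) (Fin 2) (ZMod ℓ)) + 1) = 0)} with hMdef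
  set φ : M → ↥PG := fun A => ⟨π A.1, Subgroup.mem_map_of_mem π A.2.1⟩ with hφdef
  have hfib : ∀ q : ↥PG, Nat.card {B : M // φ B = q} ≤ 4 := by
    intro q
    rcases isEmpty_or_nonempty {B : M // φ B = q} with hemp | ⟨A0⟩
    · simp [Nat.card_of_isEmpty]
    obtain ⟨⟨A, hAG, hAev⟩, hAq⟩ := A0
    set Av : Matrix (Fin 2) (Fin 2) (ZMod ℓ) := (A : Matrix (Fin 2) (Fin 2) (ZMod ℓ)) with hAv
    set p : Polynomial (ZMod ℓ) := X ^ 2 + C (-(Av 0 0 + Av 1 1)) * X + C Av.det with hpdef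
    have hpdeg : p.natDegree = 2 := by
      have h : p = C 1 * X ^ 2 + C (-(Av 0 0 + Av 1 1)) * X + C Av.det := by
        rw [hpdef]; simp
      rw [h]
      exact Polynomial.natDegree_quadratic one_ne_zero
    have hp0 : p ≠ 0 := fun h => by simp [h] at hpdeg
    have hroot : ∀ x : ZMod ℓ, Matrix.det (Av - x • 1) = 0 → x ∈ p.roots.toFinset := by
      intro x hx
      rw [Multiset.mem_toFinset, Polynomial.mem_roots']
      refine ⟨hp0, ?_⟩
      have hexp : p.eval x = Matrix.det (Av - x • 1) := by
        rw [hpdef]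
        conv_rhs => rw [Matrix.det_fin_two]
        rw [Matrix.det_fin_two]
        simp only [Polynomial.eval_add, Polynomial.eval_mul, Polynomial.eval_pow,
          Polynomial.eval_X, Polynomial.eval_C, Matrix.sub_apply, Matrix.smul_apply,
          Matrix.one_apply, smul_eq_mul]
        norm_num
        ring
      rw [Polynomial.IsRoot, hexp, hx]
    have hrep : ∀ B : {B : M // φ B = q}, ∃ u : Bool × ZMod ℓ,
        u.2 ∈ p.roots.toFinset ∧
          ((B.1.1 : Matrix (Fin 2) (Fin 2) (ZMod ℓ)) =
            (cond u.1 (u.2⁻¹) (-(u.2⁻¹))) • Av) := by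
      rintro ⟨⟨B', hBG, hBev⟩, hBq⟩
      have hππ : π A = π B' := by
        have h := hAq.trans hBq.symm
        simpa [hφdef, Subtype.ext_iff] using h
      have hc : A⁻¹ * B' ∈ Subgroup.center (GL (Fin 2) (ZMod ℓ)) := by
        rw [hπdef, QuotientGroup.mk'_apply, QuotientGroup.mk'_apply] at hππ
        exact QuotientGroup.eq.mp hππ
      obtain ⟨r, hr0, hrC⟩ := aux_central_scalar _ hc
      have hBA : (B' : Matrix (Fin 2) (Fin 2) (ZMod ℓ)) = r • Av := by
        have hsplit : B' = A * (A⁻¹ * B') := by group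
        calc (B' : Matrix (Fin 2) (Fin 2) (ZMod ℓ))
            = ((A * (A⁻¹ * B') : GL (Fin 2) (ZMod ℓ)) : Matrix (Fin 2) (Fin 2) (ZMod ℓ)) := by
              rw [← hsplit]
          _ = Av * (r • 1) := by rw [Units.val_mul, hrC]
          _ = r • Av := by rw [mul_smul_comm, mul_one]
      rcases hBev with h1 | h1
      · refine ⟨(true, r⁻¹), hroot _ ?_, ?_⟩
        · have h2 : (B' : Matrix (Fin 2) (Fin 2) (ZMod ℓ)) - 1 = r • (Av - r⁻¹ • 1) := by
            rw [hBA, smul_sub, smul_smul, mul_inv_cancel₀ hr0, one_smul]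
          rw [h2, Matrix.det_smul] at h1
          have := mul_eq_zero.mp h1
          rcases this with h | h
          · exact absurd h (pow_ne_zero _ hr0)
          · exact h
        · simp [hBA, inv_inv]
      · refine ⟨(false, -r⁻¹), hroot _ ?_, ?_⟩
        · have h2 : (B' : Matrix (Fin 2) (Fin 2) (ZMod ℓ)) + 1 = r • (Av - (-r⁻¹) • 1) := by
            rw [hBA, smul_sub, smul_smul]
            simp [mul_inv_cancel₀ hr0]
          rw [h2, Matrix.det_smul] at h1
          have := mul_eq_zero.mp h1
          rcases this with h | h
          · exact absurd h (pow_ne_zero _ hr0)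
          · exact h
        · simp [hBA, inv_neg, inv_inv]
    choose u hu1 hu2 using hrep
    have hinj : Function.Injective
        (fun B : {B : M // φ B = q} =>
          (⟨(u B).1, ⟨(u B).2, hu1 B⟩⟩ : Bool × {x : ZMod ℓ // x ∈ p.roots.toFinset})) := by
      intro B1 B2 h
      simp only [Prod.mk.injEq, Subtype.mk.injEq] at h
      obtain ⟨h1, h2⟩ := h
      have hval : (B1.1.1 : Matrix (Fin 2) (Fin 2) (ZMod ℓ))
          = (B2.1.1 : Matrix (Fin 2) (Fin 2) (ZMod ℓ)) := by
        rw [hu2 B1, hu2 B2, h1, h2]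
      exact Subtype.ext (Subtype.ext (Units.ext hval))
    calc Nat.card {B : M // φ B = q}
        ≤ Nat.card (Bool × {x : ZMod ℓ // x ∈ p.roots.toFinset}) :=
          Nat.card_le_card_of_injective _ hinj
      _ = 2 * p.roots.toFinset.card := by
          rw [Nat.card_prod, Nat.card_eq_fintype_card, Nat.card_eq_fintype_card,
            Fintype.card_bool, Fintype.card_coe]
      _ ≤ 4 := by
          have h := (Multiset.toFinset_card_le p.roots).trans
            ((Polynomial.card_roots' p).trans_eq hpdeg)
          omega
  have hM : Nat.card M ≤ 4 * Nat.card PG := aux_card_le_mul φ 4 hfib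
  calc (ℓ - 1) * Nat.card M
      ≤ (ℓ - 1) * (4 * Nat.card PG) := Nat.mul_le_mul le_rfl hM
    _ ≤ (ℓ - 1) * (4 * 60) := Nat.mul_le_mul le_rfl (Nat.mul_le_mul le_rfl hPG60)
    _ = (ℓ - 1) * (60 * 4) := by ring
    _ ≤ (ℓ - 1) * (60 * Nat.card K) := Nat.mul_le_mul le_rfl (Nat.mul_le_mul le_rfl h4K)
    _ = 60 * ((ℓ - 1) * Nat.card K) := by ring
    _ = 60 * Nat.card G := by rw [hGcard]
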